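/- Let A be an m×m complex matrix and suppose C > 0 and γ > 0 are such that ‖exp(t A)‖ ≤ C e^{−γ t} for all t ≥ 0. Let b : ℝ → ℂ^m be continuous and suppose ‖b(t)‖ ≤ M for all t ≥ t_f, for some M ≥ 0 and t_f ≥ 0. Then every differentiable φ : ℝ → ℂ^m satisfying φ'(t) = A φ(t) + b(t) for all t ≥ 0 satisfies limsup_{t → ∞} ‖φ(t)‖ ≤ (C/γ) M. -/

import Mathlib

open Matrix Polynomial Filter
open scoped Matrix.Norms.L2Operator

noncomputable section

/-- Multiplication of a vector in `EuclideanSpace ℂ (Fin m)` by an `m×m` complex matrix. -/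
def mulVecE {m : ℕ} (A : Matrix (Fin m) (Fin m) ℂ) (x : EuclideanSpace ℂ (Fin m)) :
    EuclideanSpace ℂ (Fin m) :=
  (WithLp.equiv 2 (Fin m → ℂ)).symm (A.mulVec ((WithLp.equiv 2 (Fin m → ℂ)) x))

open NormedSpace in
/-- Restriction of a complex-differentiable function to the real line. -/
theorem HasDerivAt.comp_ofReal'' {F : Type*} [NormedAddCommGroup F] [NormedSpace ℂ F]
    [NormedSpace ℝ F] [IsScalarTower ℝ ℂ F]
    {e : ℂ → F} {e' : F} {z : ℝ} (hf : HasDerivAt e e' (z : ℂ)) :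
    HasDerivAt (fun y : ℝ => e (y : ℂ)) e' z := by
  simpa [Function.comp_def] using hf.scomp z Complex.ofRealCLM.hasDerivAt

open NormedSpace in
/-- Asymptotic gain bound for a linear ODE in a complex Banach space. -/
theorem aux_asymptotic_gain {E : Type*} [NormedAddCommGroup E] [NormedSpace ℂ E]
    [NormedSpace ℝ E] [IsScalarTower ℝ ℂ E] [CompleteSpace E]
    (L : E →L[ℂ] E) (C γ : ℝ) (hC : 0 < C) (hγ : 0 < γ)
    (hexp : ∀ t : ℝ, 0 ≤ t → ‖exp ((t : ℂ) • L)‖ ≤ C * Real.exp (-γ * t))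
    (b : ℝ → E) (hb : Continuous b)
    (M tf : ℝ) (hM : 0 ≤ M) (htf : 0 ≤ tf)
    (hb_bdd : ∀ t : ℝ, tf ≤ t → ‖b t‖ ≤ M)
    (φ : ℝ → E) (hφ : Differentiable ℝ φ)
    (hode : ∀ t : ℝ, 0 ≤ t → deriv φ t = L (φ t) + b t) :
    limsup (fun t : ℝ => ‖φ t‖) atTop ≤ C / γ * M := by
  set g : ℝ → (E →L[ℂ] E) := fun t => exp ((t : ℂ) • L) with hg_def
  -- derivative of `g`
  have hg : ∀ t : ℝ, HasDerivAt g (L * g t) t := by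
    intro t
    exact HasDerivAt.comp_ofReal'' (hasDerivAt_exp_smul_const' L (t : ℂ))
  have hg_cont : Continuous g :=
    continuous_iff_continuousAt.2 fun t => (hg t).continuousAt
  -- group law
  have hmul : ∀ s t : ℝ, g s * g t = g (s + t) := by
    intro s t
    have hc : Commute ((s : ℂ) • L) ((t : ℂ) • L) :=
      ((Commute.refl L).smul_left (s : ℂ)).smul_right (t : ℂ)
    have := (NormedSpace.exp_add_of_commute_of_mem_ball (𝕂 := ℂ) hc
      ((NormedSpace.expSeries_radius_eq_top ℂ (E →L[ℂ] E)).symm ▸ edist_lt_top _ _)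
      ((NormedSpace.expSeries_radius_eq_top ℂ (E →L[ℂ] E)).symm ▸ edist_lt_top _ _)).symm
    simpa only [hg_def, add_smul, Complex.ofReal_add] using this
  have hinv : ∀ t : ℝ, g t * g (-t) = 1 := by
    intro t
    rw [hmul t (-t), show t + -t = (0 : ℝ) by ring]
    show exp (((0 : ℝ) : ℂ) • L) = 1
    rw [Complex.ofReal_zero, zero_smul, NormedSpace.exp_zero]
  -- L commutes with g
  have hLg : ∀ t : ℝ, g t * L = L * g t := fun t =>
    (((Commute.refl L).smul_right (t : ℂ)).exp_right).symm
  -- the auxiliary function ψ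
  set ψ : ℝ → E := fun t => g (-t) (φ t) with hψ_def
  set ρ : (E →L[ℂ] E) →ₗᵢ[ℝ] (E →L[ℝ] E) :=
    ContinuousLinearMap.restrictScalarsIsometry ℂ E E ℝ ℝ with hρ_def
  have hψ : ∀ t : ℝ, 0 ≤ t → HasDerivAt ψ (g (-t) (b t)) t := by
    intro t ht
    have h1 : HasDerivAt (fun u : ℝ => g (-u)) ((-1 : ℝ) • (L * g (-t))) t :=
      (hg (-t)).scomp t (hasDerivAt_neg t)
    have h1' : HasDerivAt (fun u : ℝ => ρ (g (-u))) (ρ ((-1 : ℝ) • (L * g (-t)))) t :=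
      ρ.toContinuousLinearMap.hasFDerivAt.comp_hasDerivAt t h1
    have h2 : HasDerivAt φ (deriv φ t) t := (hφ t).hasDerivAt
    have h3 := h1'.clm_apply h2
    convert h3 using 1
    · rfl
    have hcomm : L (g (-t) (φ t)) = g (-t) (L (φ t)) := by
      calc L (g (-t) (φ t)) = (L * g (-t)) (φ t) := rfl
        _ = (g (-t) * L) (φ t) := by rw [hLg]
        _ = g (-t) (L (φ t)) := rfl
    rw [hode t ht]
    have hres1 : (ρ ((-1 : ℝ) • (L * g (-t)))) (φ t) = (-1 : ℝ) • (L ((g (-t)) (φ t))) := rfl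
    have hres2 : (ρ (g (-t))) (L (φ t) + b t) = g (-t) (L (φ t)) + g (-t) (b t) := by
      show (g (-t)) (L (φ t) + b t) = _
      rw [map_add]
    rw [hres1, hres2, hcomm, neg_one_smul]
    abel
  -- integrability of the integrand
  have hcont_int : Continuous fun u : ℝ => g (-u) (b u) := by
    have : Continuous fun u : ℝ => (ρ (g (-u))) (b u) :=
      (ρ.continuous.comp (hg_cont.comp continuous_neg)).clm_apply hb
    exact this
  -- variation of constants
  have hvar : ∀ t : ℝ, tf ≤ t →
      φ t = g (t - tf) (φ tf) + ∫ u in tf..t, g (t - u) (b u) := by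
    intro t ht
    have hftc : (∫ u in tf..t, g (-u) (b u)) = ψ t - ψ tf := by
      apply intervalIntegral.integral_eq_sub_of_hasDerivAt
      · intro x hx
        rw [Set.uIcc_of_le ht] at hx
        exact hψ x (le_trans htf hx.1)
      · exact hcont_int.intervalIntegrable _ _
    have hrec : ∀ s : ℝ, g s (ψ s) = φ s := by
      intro s
      calc g s (ψ s) = (g s * g (-s)) (φ s) := rfl
        _ = φ s := by rw [hinv]; rfl
    have hkey : φ t = g t (ψ tf) + g t (∫ u in tf..t, g (-u) (b u)) := by
      rw [hftc, map_sub, hrec t]; abel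
    rw [hkey]
    congr 1
    · show g t (g (-tf) (φ tf)) = _
      calc g t (g (-tf) (φ tf)) = (g t * g (-tf)) (φ tf) := rfl
        _ = g (t - tf) (φ tf) := by rw [hmul, sub_eq_add_neg]
    · rw [← (g t).intervalIntegral_comp_comm (hcont_int.intervalIntegrable _ _)]
      apply intervalIntegral.integral_congr
      intro u _
      show (g t * g (-u)) (b u) = _
      rw [hmul]; simp only [sub_eq_add_neg]
  -- pointwise bound
  have hbound : ∀ t : ℝ, tf ≤ t →
      ‖φ t‖ ≤ C * Real.exp (-γ * (t - tf)) * ‖φ tf‖ + C / γ * M := by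
    intro t ht
    rw [hvar t ht]
    have h1 : ‖g (t - tf) (φ tf)‖ ≤ C * Real.exp (-γ * (t - tf)) * ‖φ tf‖ := by
      calc ‖g (t - tf) (φ tf)‖ ≤ ‖g (t - tf)‖ * ‖φ tf‖ := (g (t - tf)).le_opNorm _
        _ ≤ C * Real.exp (-γ * (t - tf)) * ‖φ tf‖ :=
          mul_le_mul_of_nonneg_right (hexp _ (by linarith)) (norm_nonneg _)
    have h2 : ‖∫ u in tf..t, g (t - u) (b u)‖ ≤ C / γ * M := by
      have hF : ∀ u : ℝ, HasDerivAt (fun u => C * M / γ * Real.exp (γ * u - γ * t))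
          (C * M * Real.exp (γ * u - γ * t)) u := by
        intro u
        have h4 : HasDerivAt (fun u : ℝ => γ * u - γ * t) γ u := by
          simpa using ((hasDerivAt_id u).const_mul γ).sub_const (γ * t)
        have h6 := h4.exp.const_mul (C * M / γ)
        refine h6.congr_deriv ?_
        rw [mul_comm (Real.exp _) γ, ← mul_assoc, div_mul_cancel₀ _ hγ.ne']
      have hgint : (∫ u in tf..t, C * M * Real.exp (γ * u - γ * t)) =
          C * M / γ * Real.exp (γ * t - γ * t) - C * M / γ * Real.exp (γ * tf - γ * t) := by
        apply intervalIntegral.integral_eq_sub_of_hasDerivAt (fun x _ => hF x)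
        exact Continuous.intervalIntegrable (by fun_prop) _ _
      have hle : ‖∫ u in tf..t, g (t - u) (b u)‖ ≤
          |∫ u in tf..t, C * M * Real.exp (γ * u - γ * t)| := by
        apply intervalIntegral.norm_integral_le_abs_of_norm_le
        · filter_upwards [MeasureTheory.ae_restrict_mem measurableSet_uIoc] with u hu
          rw [Set.uIoc_of_le ht] at hu
          calc ‖g (t - u) (b u)‖ ≤ ‖g (t - u)‖ * ‖b u‖ := (g (t - u)).le_opNorm _
            _ ≤ (C * Real.exp (-γ * (t - u))) * M := by
              apply mul_le_mul (hexp _ (by linarith [hu.2])) (hb_bdd u hu.1.le) (norm_nonneg _)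
              positivity
            _ = C * M * Real.exp (γ * u - γ * t) := by ring_nf
        · exact Continuous.intervalIntegrable (by fun_prop) _ _
      refine hle.trans ?_
      rw [hgint, abs_of_nonneg]
      · have hexp1 : Real.exp (γ * t - γ * t) = 1 := by simp
        rw [hexp1]
        have h10 : 0 ≤ C * M / γ * Real.exp (γ * tf - γ * t) := by positivity
        have h7 : C * M / γ = C / γ * M := by ring
        linarith
      · have h8 : Real.exp (γ * tf - γ * t) ≤ Real.exp (γ * t - γ * t) :=
          Real.exp_le_exp.2 (by nlinarith)
        have h9 : (0:ℝ) ≤ C * M / γ := by positivity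
        nlinarith
    calc ‖g (t - tf) (φ tf) + ∫ u in tf..t, g (t - u) (b u)‖
        ≤ ‖g (t - tf) (φ tf)‖ + ‖∫ u in tf..t, g (t - u) (b u)‖ := norm_add_le _ _
      _ ≤ C * Real.exp (-γ * (t - tf)) * ‖φ tf‖ + C / γ * M := add_le_add h1 h2
  -- take limsup
  have hlim : Tendsto (fun t : ℝ => C * Real.exp (-γ * (t - tf)) * ‖φ tf‖ + C / γ * M)
      atTop (nhds (C * 0 * ‖φ tf‖ + C / γ * M)) := by
    refine Tendsto.add ?_ tendsto_const_nhds
    refine Tendsto.mul_const _ (Tendsto.const_mul _ ?_)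
    refine Real.tendsto_exp_atBot.comp ?_
    have h11 : Tendsto (fun t : ℝ => t - tf) atTop atTop :=
      tendsto_atTop_add_const_right _ (-tf) tendsto_id
    exact h11.const_mul_atTop_of_neg (by linarith)
  have heq : C * 0 * ‖φ tf‖ + C / γ * M = C / γ * M := by ring
  rw [heq] at hlim
  calc limsup (fun t : ℝ => ‖φ t‖) atTop
      ≤ limsup (fun t : ℝ => C * Real.exp (-γ * (t - tf)) * ‖φ tf‖ + C / γ * M) atTop :=
        limsup_le_limsup (eventually_atTop.2 ⟨tf, hbound⟩)
          (isCoboundedUnder_le_of_le atTop fun t => norm_nonneg _)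
          hlim.isBoundedUnder_le
    _ = C / γ * M := hlim.limsup_eq

/-- asymptotic gain bound, corresponding to estimate (39) in the proof
of Theorem 2 of the paper: if `‖exp (t A)‖ ≤ C e^{-γ t}` for all `t ≥ 0` (operator
norm), `b` is continuous with `‖b t‖ ≤ M` for `t ≥ t_f`, then every differentiable `φ`
with `φ' t = A (φ t) + b t` for all `t ≥ 0` satisfies
`limsup_{t → ∞} ‖φ t‖ ≤ (C/γ) M`. -/
theorem hurwitz_asymptotic_gain
    (m : ℕ) (hm : 1 ≤ m)
    (A : Matrix (Fin m) (Fin m) ℂ)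
    (C γ : ℝ) (hC : 0 < C) (hγ : 0 < γ)
    (hexp : ∀ t : ℝ, 0 ≤ t → ‖NormedSpace.exp (t • A)‖ ≤ C * Real.exp (-γ * t))
    (b : ℝ → EuclideanSpace ℂ (Fin m)) (hb : Continuous b)
    (M tf : ℝ) (hM : 0 ≤ M) (htf : 0 ≤ tf)
    (hb_bdd : ∀ t : ℝ, tf ≤ t → ‖b t‖ ≤ M) :
    ∀ φ : ℝ → EuclideanSpace ℂ (Fin m), Differentiable ℝ φ →
      (∀ t : ℝ, 0 ≤ t → deriv φ t = mulVecE A (φ t) + b t) →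
      limsup (fun t : ℝ => ‖φ t‖) atTop ≤ C / γ * M := by
  intro φ hφ hode
  set T := Matrix.toEuclideanCLM (n := Fin m) (𝕜 := ℂ) with hT_def
  have hT_norm : ∀ X : Matrix (Fin m) (Fin m) ℂ, ‖T X‖ = ‖X‖ := fun X => rfl
  have hT_cont : Continuous T := by
    refine AddMonoidHomClass.continuous_of_bound T 1 fun X => ?_
    rw [one_mul, hT_norm]
  have hTA : ∀ x : EuclideanSpace ℂ (Fin m), T A x = mulVecE A x := fun x => rfl
  have hexp' : ∀ t : ℝ, 0 ≤ t →
      ‖NormedSpace.exp ((t : ℂ) • T A)‖ ≤ C * Real.exp (-γ * t) := by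
    intro t ht
    have h1 : T (NormedSpace.exp (t • A)) = NormedSpace.exp (T (t • A)) :=
      NormedSpace.map_exp_of_mem_ball (𝕂 := ℂ) T hT_cont _
        ((NormedSpace.expSeries_radius_eq_top ℂ (Matrix (Fin m) (Fin m) ℂ)).symm ▸ edist_lt_top _ _)
    have h2 : T (t • A) = (t : ℂ) • T A := by
      rw [← Complex.coe_smul t A, _root_.map_smul]
    rw [← h2, ← h1, hT_norm]
    exact hexp t ht
  have hode' : ∀ t : ℝ, 0 ≤ t → deriv φ t = T A (φ t) + b t := by
    intro t ht
    rw [hode t ht, hTA]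
  exact aux_asymptotic_gain (T A) C γ hC hγ hexp' b hb M tf hM htf hb_bdd φ hφ hode'

end
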